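/- arXiv:2310.14392 — 4 statements merged into one kernel-verified Lean document; each statement's English description precedes it below -/
import Mathlib

section
/- Define W₂ = 2·(1+W₁)/(2+W₁) with W₁ = 1, and recursively Wₙ = n·(1+W_{n−1})/(n+W_{n−1}) for n ≥ 2. Then for all n ≥ 2, Wₙ > √n − 1/4. -/
lemma key_step (n : ℕ) (hn : 2 ≤ n) (w : ℝ)
    (hw : Real.sqrt ((n : ℝ) - 1) - 1 / 4 < w) :
    Real.sqrt (n : ℝ) - 1 / 4 < (n : ℝ) * (1 + w) / ((n : ℝ) + w) := by
  have hn2 : (2 : ℝ) ≤ (n : ℝ) := by exact_mod_cast hn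
  set s := Real.sqrt ((n : ℝ) - 1) with hs
  set t := Real.sqrt (n : ℝ) with ht
  have hs2 : s ^ 2 = (n : ℝ) - 1 := Real.sq_sqrt (by linarith)
  have ht2 : t ^ 2 = (n : ℝ) := Real.sq_sqrt (by linarith)
  have hs0 : 0 ≤ s := Real.sqrt_nonneg _
  have ht0 : 0 ≤ t := Real.sqrt_nonneg _
  have hs1 : (1 : ℝ) ≤ s := by nlinarith
  have ht1 : (1 : ℝ) ≤ t := by nlinarith
  have hwpos : (0 : ℝ) < w := by linarith
  have hden : (0 : ℝ) < (n : ℝ) + w := by linarith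
  rw [lt_div_iff₀ hden]
  have ht2' : (2:ℝ) ≤ t ^ 2 := by linarith
  have hpoly : 7/8 * t^3 - 11/8 * t^2 + 17/32 * t - 17/256 > 0 := by
    nlinarith [sq_nonneg (t - 1), sq_nonneg t, ht1]
  have hb : (0:ℝ) < t^3 - t^2 - t/4 + 1/16 := by
    nlinarith [ht2', ht1, sq_nonneg (t - 1)]
  have ha : (0:ℝ) ≤ s * (t - 1/2)^2 := by positivity
  have hkey : s * (t - 1/2)^2 > t^3 - t^2 - t/4 + 1/16 := by
    have h : s^2 = t^2 - 1 := by rw [hs2, ht2]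
    have hsq : (s * (t - 1/2)^2)^2 - (t^3 - t^2 - t/4 + 1/16)^2
        = 7/8 * t^3 - 11/8 * t^2 + 17/32 * t - 17/256 := by
      linear_combination (t - 1/2)^4 * h
    by_contra hle
    push_neg at hle
    have h2 : (s * (t - 1/2)^2)^2 ≤ (t^3 - t^2 - t/4 + 1/16)^2 :=
      pow_le_pow_left₀ ha hle 2
    linarith
  have hcoef : (0 : ℝ) < (n : ℝ) - t + 1/4 := by nlinarith
  nlinarith [mul_pos hcoef (by linarith : (0:ℝ) < w - (s - 1/4)), hkey, ht2, hs2]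

/-- The total-biomass recursion `W₁ = 1`, `Wₙ = n(1+W_{n-1})/(n+W_{n-1})` of the
perfectly unbalanced tree satisfies `Wₙ > √n - 1/4` for all `n ≥ 2`. -/
theorem stmt4 (W : ℕ → ℝ) (hW1 : W 1 = 1)
    (hWrec : ∀ n, 2 ≤ n → W n = n * (1 + W (n - 1)) / (n + W (n - 1))) :
    ∀ n : ℕ, 2 ≤ n → Real.sqrt (n : ℝ) - 1 / 4 < W n := by
  intro n hn
  induction n, hn using Nat.le_induction with
  | base =>
    rw [hWrec 2 le_rfl]
    norm_num [hW1]
    nlinarith [Real.sq_sqrt (by norm_num : (0:ℝ) ≤ 2), Real.sqrt_nonneg 2]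
  | succ n hn ih =>
    have h2 : 2 ≤ n + 1 := by omega
    have hc : ((n+1 : ℕ) : ℝ) - 1 = (n : ℝ) := by push_cast; ring
    have hw : Real.sqrt (((n+1 : ℕ) : ℝ) - 1) - 1/4 < W n := by rw [hc]; exact ih
    have h := key_step (n+1) h2 (W n) hw
    rw [hWrec (n+1) h2]
    simpa using h
end

section
/- Let x* be a saturated equilibrium for growth vector r = κ·1 (κ > 0) and symmetric positive definite matrix A, and let μ > 0. Then y = κ x* / (κ + μ·1ᵀx*) is a saturated equilibrium for (κ·1, A + μ 11ᵀ), with the same support as x*. -/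
open Matrix

/-- If `x*` is a saturated equilibrium for growth vector `κ·1` (κ > 0) and
symmetric positive definite `A`, and `μ > 0`, then
`y = κ x* / (κ + μ 1ᵀx*)` is a saturated equilibrium for
`(κ·1, A + μ 11ᵀ)` with the same support. -/
theorem stmt16 {n : ℕ} (A : Matrix (Fin n) (Fin n) ℝ) (hA : A.PosDef)
    (κ : ℝ) (hκ : 0 < κ) (μ : ℝ) (hμ : 0 < μ) (x : Fin n → ℝ)
    (hpos : ∀ i, 0 ≤ x i)
    (hcomp : ∀ i, x i * (κ - A.mulVec x i) = 0)
    (hsat : ∀ i, x i = 0 → κ - A.mulVec x i ≤ 0)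
    (B : Matrix (Fin n) (Fin n) ℝ)
    (hB : B = A + μ • Matrix.of (fun _ _ : Fin n => (1 : ℝ)))
    (y : Fin n → ℝ) (hy : y = (κ / (κ + μ * ∑ i, x i)) • x) :
    (∀ i, 0 ≤ y i) ∧
      (∀ i, y i * (κ - B.mulVec y i) = 0) ∧
      (∀ i, y i = 0 → κ - B.mulVec y i ≤ 0) ∧
      (∀ i, 0 < y i ↔ 0 < x i) := by
  set s := ∑ i, x i with hs
  have hs0 : 0 ≤ s := Finset.sum_nonneg fun i _ => hpos i
  have hd : 0 < κ + μ * s := by positivity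
  set c := κ / (κ + μ * s) with hc
  have hc0 : 0 < c := by positivity
  have key : ∀ i, κ - B.mulVec y i = c * (κ - A.mulVec x i) := by
    intro i
    have h1 : B.mulVec y i = c * A.mulVec x i + c * (μ * s) := by
      simp only [hB, hy, Matrix.add_mulVec, Matrix.smul_mulVec,
        Matrix.mulVec_smul, Pi.add_apply, Pi.smul_apply, smul_eq_mul]
      have : (Matrix.of (fun _ _ : Fin n => (1 : ℝ))).mulVec x i = s := by
        simp [Matrix.mulVec, dotProduct, hs]
      rw [this]; ring
    have h2 : κ - c * (μ * s) = c * κ := by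
      have hcd : c * (κ + μ * s) = κ := by rw [hc, div_mul_cancel₀ _ hd.ne']
      linear_combination -hcd
    rw [h1]
    nlinarith [h2]
  refine ⟨fun i => ?_, fun i => ?_, fun i hi => ?_, fun i => ?_⟩
  · rw [hy]; exact mul_nonneg hc0.le (hpos i)
  · rw [key i, hy]
    simp only [Pi.smul_apply, smul_eq_mul]
    linear_combination c * c * hcomp i
  · rw [key i]
    have hx : x i = 0 := by
      have := hi
      rw [hy] at this
      simp only [Pi.smul_apply, smul_eq_mul] at this
      rcases mul_eq_zero.1 this with h | h
      · exact absurd h hc0.ne'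
      · exact h
    have := hsat i hx
    nlinarith
  · rw [hy]
    simp only [Pi.smul_apply, smul_eq_mul]
    constructor
    · intro h
      rcases (hpos i).lt_or_eq with h' | h'
      · exact h'
      · simp [← h'] at h
    · intro h; exact mul_pos hc0 h
end

section
/- Let A be an n×n symmetric positive definite matrix, r ∈ ℝⁿ, and suppose x̂ is a saturated equilibrium with support S = {i : x̂ᵢ > 0} such that strict non-invasibility holds: (r − A x̂)ᵢ < 0 for all i ∉ S. Then the function V(x) = Σᵢ (xᵢ − x̂ᵢ log xᵢ), defined on the open positive orthant, satisfies: the derivative of V along trajectories of dxᵢ/dt = xᵢ(r − A x)ᵢ equals −(x − x̂)ᵀA(x − x̂) + Σ_{i∉S} xᵢ·(r − A x̂)ᵢ, which is ≤ 0 for all x in the positive orthant, with equality if and only if x = x̂. -/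
open Matrix

/-- Lyapunov function computation: for a saturated equilibrium `x̂` with strict
non-invasibility, the derivative of `V(x) = Σᵢ (xᵢ - x̂ᵢ log xᵢ)` along
trajectories of the Lotka-Volterra system equals
`-(x - x̂)ᵀ A (x - x̂) + Σ_{i : x̂ᵢ = 0} xᵢ (r - A x̂)ᵢ`,
which is `≤ 0` on the positive orthant, with equality iff `x = x̂`. -/
theorem stmt17 {n : ℕ} (A : Matrix (Fin n) (Fin n) ℝ) (hA : A.PosDef)
    (r xh : Fin n → ℝ)
    (hpos : ∀ i, 0 ≤ xh i)
    (heq : ∀ i, 0 < xh i → r i - A.mulVec xh i = 0)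
    (hninv : ∀ i, xh i = 0 → r i - A.mulVec xh i < 0) :
    ∀ x : Fin n → ℝ, (∀ i, 0 < x i) →
      (∑ i, (1 - xh i / x i) * (x i * (r i - A.mulVec x i)) =
          -((fun i => x i - xh i) ⬝ᵥ A.mulVec (fun i => x i - xh i)) +
            ∑ i, (if xh i = 0 then x i * (r i - A.mulVec xh i) else 0)) ∧
      (-((fun i => x i - xh i) ⬝ᵥ A.mulVec (fun i => x i - xh i)) +
          ∑ i, (if xh i = 0 then x i * (r i - A.mulVec xh i) else 0) ≤ 0) ∧
      (-((fun i => x i - xh i) ⬝ᵥ A.mulVec (fun i => x i - xh i)) +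
          ∑ i, (if xh i = 0 then x i * (r i - A.mulVec xh i) else 0) = 0 ↔
        x = xh) := by
  intro x hx
  have hmv : ∀ i, A.mulVec x i = A.mulVec xh i + A.mulVec (fun i => x i - xh i) i := by
    intro i
    simp only [Matrix.mulVec, dotProduct, ← Finset.sum_add_distrib]
    exact Finset.sum_congr rfl fun j _ => by ring
  -- quadratic term nonnegative
  have hq0 : 0 ≤ (fun i => x i - xh i) ⬝ᵥ A.mulVec (fun i => x i - xh i) := by
    have := hA.posSemidef.dotProduct_mulVec_nonneg (fun i => x i - xh i)
    simpa using this
  -- the if-sum is nonpositive, each term nonpositive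
  have hterm : ∀ i, (if xh i = 0 then x i * (r i - A.mulVec xh i) else 0) ≤ 0 := by
    intro i
    by_cases h : xh i = 0
    · simp only [h, if_true]
      exact le_of_lt (mul_neg_of_pos_of_neg (hx i) (hninv i h))
    · simp [h]
  have hsum0 : ∑ i, (if xh i = 0 then x i * (r i - A.mulVec xh i) else 0) ≤ 0 :=
    Finset.sum_nonpos fun i _ => hterm i
  refine ⟨?_, ?_, ?_⟩
  · have h1 : ∀ i, (1 - xh i / x i) * (x i * (r i - A.mulVec x i)) =
        (x i - xh i) * (r i - A.mulVec xh i)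
          - (x i - xh i) * A.mulVec (fun i => x i - xh i) i := by
      intro i
      have hxi : x i ≠ 0 := (hx i).ne'
      rw [hmv i]
      field_simp
      ring
    have h2 : ∀ i, (x i - xh i) * (r i - A.mulVec xh i) =
        (if xh i = 0 then x i * (r i - A.mulVec xh i) else 0) := by
      intro i
      by_cases h : xh i = 0
      · simp [h]
      · have hp : 0 < xh i := lt_of_le_of_ne (hpos i) (Ne.symm h)
        simp [h, heq i hp]
    calc ∑ i, (1 - xh i / x i) * (x i * (r i - A.mulVec x i))
        = ∑ i, ((if xh i = 0 then x i * (r i - A.mulVec xh i) else 0)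
            - (x i - xh i) * A.mulVec (fun i => x i - xh i) i) := by
          exact Finset.sum_congr rfl fun i _ => by rw [h1 i, h2 i]
      _ = -((fun i => x i - xh i) ⬝ᵥ A.mulVec (fun i => x i - xh i)) +
            ∑ i, (if xh i = 0 then x i * (r i - A.mulVec xh i) else 0) := by
          rw [Finset.sum_sub_distrib, dotProduct]
          ring
  · linarith
  · constructor
    · intro h0
      have hq : (fun i => x i - xh i) ⬝ᵥ A.mulVec (fun i => x i - xh i) = 0 := by
        linarith [hsum0]
      have hz : (fun i : Fin n => x i - xh i) = 0 := by
        by_contra hne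
        have := hA.dotProduct_mulVec_pos hne
        rw [show star (fun i : Fin n => x i - xh i) = fun i => x i - xh i from rfl] at this
        rw [hq] at this
        exact lt_irrefl 0 this
      funext i
      have := congrFun hz i
      simp at this
      linarith
    · intro h
      subst h
      have hiff : ∀ i, ¬ (x i = 0) := fun i => (hx i).ne'
      simp [hiff, dotProduct]
end

section
/- Let Σ be the n×n covariance matrix induced by an ultrametric rooted phylogenetic tree, constructed recursively: either Σ is a 1×1 positive matrix, or Σ = blockdiag(Σ̃₁,…,Σ̃ₘ) + t·11ᵀ where t > 0 and each Σ̃ₖ is itself (inductively) such that the system Σ̃ₖ xₖ = 1 has a solution with all entries strictly positive. Then the system Σ x = 1 has a solution with all entries strictly positive. -/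
open Matrix

/-- The class of covariance matrices induced by ultrametric rooted phylogenetic
trees: either a positive 1×1 matrix, or a block diagonal of such matrices plus
`t > 0` times the all-ones matrix. -/
inductive TreeCov : {ι : Type} → Matrix ι ι ℝ → Prop
  | base (c : ℝ) (hc : 0 < c) : TreeCov (Matrix.of fun _ _ : Fin 1 => c)
  | node {m : ℕ} (sz : Fin m → ℕ)
      (M : ∀ k, Matrix (Fin (sz k)) (Fin (sz k)) ℝ) (t : ℝ) (ht : 0 < t)
      (h : ∀ k, TreeCov (M k)) :
      TreeCov (Matrix.blockDiagonal' M + t • Matrix.of (fun _ _ => (1 : ℝ)))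

/-- Full coexistence in the deterministic limit: for any tree-induced
covariance matrix `Σ`, the system `Σ x = 1` has a solution with all entries
strictly positive. -/
theorem stmt19 {ι : Type} [Fintype ι] (S : Matrix ι ι ℝ) (h : TreeCov S) :
    ∃ x : ι → ℝ, S.mulVec x = (fun _ => 1) ∧ ∀ i, 0 < x i := by
  revert ‹Fintype ι›
  induction h with
  | base c hc =>
    intro inst
    cases Subsingleton.elim inst (by infer_instance)
    refine ⟨fun _ => 1 / c, ?_, fun _ => by positivity⟩
    funext i
    simp [Matrix.mulVec, dotProduct]
    field_simp
  | node sz M t ht h IH =>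
    intro inst
    cases Subsingleton.elim inst Sigma.instFintype
    -- choose solutions for each block
    choose y hy hypos using fun k => IH k
    set s : ℝ := ∑ p : Σ k, Fin (sz k), y p.1 p.2 with hs
    have hs0 : 0 ≤ s := Finset.sum_nonneg fun p _ => (hypos p.1 p.2).le
    have hc : (0 : ℝ) < 1 + t * s := by positivity
    refine ⟨fun p => y p.1 p.2 / (1 + t * s), ?_, fun p => by
      exact div_pos (hypos p.1 p.2) hc⟩
    funext p
    obtain ⟨k, i⟩ := p
    have hblock : ∀ j : Σ k, Fin (sz k),
        Matrix.blockDiagonal' M ⟨k, i⟩ j =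
          if h : j.1 = k then M k i (h ▸ j.2) else 0 := by
      rintro ⟨k', j⟩
      by_cases hk : k' = k
      · subst hk
        simp [Matrix.blockDiagonal'_apply_eq]
      · simp [Matrix.blockDiagonal'_apply_ne _ _ _ (fun h => hk h.symm), hk]
    have key : (Matrix.blockDiagonal' M).mulVec
        (fun p : Σ k, Fin (sz k) => y p.1 p.2) ⟨k, i⟩ = 1 := by
      have := congrFun (hy k) i
      simp only [Matrix.mulVec, dotProduct] at this ⊢
      rw [← Finset.univ_sigma_univ, Finset.sum_sigma]
      rw [Finset.sum_eq_single k]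
      · simpa [Matrix.blockDiagonal'_apply_eq] using this
      · intro k' _ hk'
        apply Finset.sum_eq_zero
        intro j _
        rw [Matrix.blockDiagonal'_apply_ne _ _ _ (fun h => hk' h.symm)]
        ring
      · intro hk; exact absurd (Finset.mem_univ k) hk
    have hones : (t • Matrix.of (fun _ _ : Σ k, Fin (sz k) => (1 : ℝ))).mulVec
        (fun p : Σ k, Fin (sz k) => y p.1 p.2) ⟨k, i⟩ = t * s := by
      simp [Matrix.mulVec, dotProduct, hs, Finset.mul_sum]
    have hlin : ∀ (A : Matrix (Σ k, Fin (sz k)) (Σ k, Fin (sz k)) ℝ),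
        A.mulVec (fun p : Σ k, Fin (sz k) => y p.1 p.2 / (1 + t * s)) ⟨k, i⟩ =
        (A.mulVec (fun p : Σ k, Fin (sz k) => y p.1 p.2) ⟨k, i⟩) / (1 + t * s) := by
      intro A
      simp only [Matrix.mulVec, dotProduct, Finset.sum_div]
      congr 1; funext j; ring
    simp only [Matrix.add_mulVec, Pi.add_apply, hlin, key, hones]
    field_simp
end
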